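/- There exist a negative constant L₁₁ and a positive constant L₁₂ such that |clog''(x)| ≤ L₁₁·log(x)/x³ + L₁₂ for all x > 0. -/

import Mathlib

noncomputable def clog (x₀ x : ℝ) : ℝ :=
  if 0 < x ∧ x ≤ x₀ then -((x - x₀)^2 / x) * Real.log (x / x₀) else 0

/-- The smooth formula for `clog` on `(0, x₀]`. -/
noncomputable def Ffun (x₀ : ℝ) : ℝ → ℝ := fun y => -((y - x₀)^2 / y) * Real.log (y / x₀)

/-- First derivative of `Ffun` on `(0, ∞)`. -/
noncomputable def gfun (x₀ : ℝ) : ℝ → ℝ :=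
  fun y => -(1 - x₀^2/y^2) * Real.log (y/x₀) - (y - x₀)^2/y^2

/-- The global first derivative of `clog` (on `(0,∞)`). -/
noncomputable def Gfun (x₀ : ℝ) : ℝ → ℝ := fun y => if y ≤ x₀ then gfun x₀ y else 0

/-- Second derivative formula on `(0, x₀]`. -/
noncomputable def hfun (x₀ : ℝ) : ℝ → ℝ :=
  fun y => -(2*x₀^2/y^3) * Real.log (y/x₀) - 1/y - 2*x₀/y^2 + 3*x₀^2/y^3

/-- The global second derivative of `clog` (on `(0,∞)`). -/
noncomputable def Hfun (x₀ : ℝ) : ℝ → ℝ := fun y => if y ≤ x₀ then hfun x₀ y else 0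

lemma gfun_x₀ {x₀ : ℝ} (hx₀ : 0 < x₀) : gfun x₀ x₀ = 0 := by
  unfold gfun
  rw [div_self hx₀.ne', Real.log_one, sub_self]
  field_simp
  ring

lemma hfun_x₀ {x₀ : ℝ} (hx₀ : 0 < x₀) : hfun x₀ x₀ = 0 := by
  unfold hfun
  rw [div_self hx₀.ne', Real.log_one]
  field_simp
  ring

lemma F_deriv {x₀ : ℝ} (hx₀ : 0 < x₀) {x : ℝ} (hx : 0 < x) :
    HasDerivAt (Ffun x₀) (gfun x₀ x) x := by
  have hx' : x ≠ 0 := hx.ne'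
  have hx₀' : x₀ ≠ 0 := hx₀.ne'
  have h1 : HasDerivAt (fun y : ℝ => (y - x₀)^2) (2*(x - x₀)) x := by
    simpa using ((hasDerivAt_id x).sub_const x₀).fun_pow 2
  have h2 : HasDerivAt (fun y : ℝ => (y - x₀)^2 / y)
      ((2*(x - x₀) * x - (x - x₀)^2 * 1) / x^2) x := h1.div (hasDerivAt_id x) hx'
  have h3 : HasDerivAt (fun y : ℝ => Real.log (y / x₀)) ((1/x₀) / (x/x₀)) x :=
    ((hasDerivAt_id x).div_const x₀).log (by positivity)
  have h4 := (h2.neg).mul h3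
  refine h4.congr_deriv ?_
  unfold gfun
  simp only [Pi.neg_apply]
  field_simp
  ring

lemma g_deriv {x₀ : ℝ} (hx₀ : 0 < x₀) {x : ℝ} (hx : 0 < x) :
    HasDerivAt (gfun x₀) (hfun x₀ x) x := by
  have hx' : x ≠ 0 := hx.ne'
  have hx₀' : x₀ ≠ 0 := hx₀.ne'
  have hxsq : x^2 ≠ 0 := pow_ne_zero 2 hx'
  have h1 : HasDerivAt (fun y : ℝ => (y - x₀)^2) (2*(x - x₀)) x := by
    simpa using ((hasDerivAt_id x).sub_const x₀).fun_pow 2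
  have hsq : HasDerivAt (fun y : ℝ => y^2) (2*x) x := by
    simpa using (hasDerivAt_id x).fun_pow 2
  have hA : HasDerivAt (fun y : ℝ => 1 - x₀^2 / y^2)
      (0 - (0 * x^2 - x₀^2 * (2*x)) / (x^2)^2) x :=
    (hasDerivAt_const x (1:ℝ)).sub (((hasDerivAt_const x (x₀^2))).div hsq hxsq)
  have h3 : HasDerivAt (fun y : ℝ => Real.log (y / x₀)) ((1/x₀) / (x/x₀)) x :=
    ((hasDerivAt_id x).div_const x₀).log (by positivity)
  have hB := (hA.neg).mul h3
  have hC : HasDerivAt (fun y : ℝ => (y - x₀)^2 / y^2)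
      ((2*(x - x₀) * x^2 - (x - x₀)^2 * (2*x)) / (x^2)^2) x := h1.div hsq hxsq
  have h4 := hB.sub hC
  refine h4.congr_deriv ?_
  unfold hfun
  simp only [Pi.neg_apply]
  field_simp
  ring

lemma clog_eq_zero_of_ge {x₀ z : ℝ} (hz : x₀ ≤ z) : clog x₀ z = 0 := by
  unfold clog
  split_ifs with h
  · obtain rfl : z = x₀ := le_antisymm h.2 hz
    simp
  · rfl

lemma deriv_clog_eq {x₀ : ℝ} (hx₀ : 0 < x₀) :
    ∀ y, 0 < y → deriv (clog x₀) y = Gfun x₀ y := by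
  intro y hy
  rcases lt_trichotomy y x₀ with hlt | heq | hgt
  · have hev : clog x₀ =ᶠ[nhds y] Ffun x₀ := by
      filter_upwards [isOpen_Ioo.mem_nhds (show y ∈ Set.Ioo 0 x₀ from ⟨hy, hlt⟩)] with z hz
      unfold clog Ffun
      rw [if_pos ⟨hz.1, hz.2.le⟩]
    rw [((F_deriv hx₀ hy).congr_of_eventuallyEq hev).deriv]
    unfold Gfun
    rw [if_pos hlt.le]
  · -- y = x₀
    rw [heq]
    have left : HasDerivWithinAt (clog x₀) 0 (Set.Iic x₀) x₀ := by
      have hF : HasDerivAt (Ffun x₀) 0 x₀ := gfun_x₀ hx₀ ▸ F_deriv hx₀ hx₀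
      refine (hF.hasDerivWithinAt).congr_of_eventuallyEq ?_ ?_
      · filter_upwards [mem_nhdsWithin_of_mem_nhds (Ioi_mem_nhds hx₀),
          self_mem_nhdsWithin] with z hz1 hz2
        unfold clog Ffun
        rw [if_pos ⟨hz1, hz2⟩]
      · unfold clog Ffun
        rw [if_pos ⟨hx₀, le_refl x₀⟩]
    have right : HasDerivWithinAt (clog x₀) 0 (Set.Ici x₀) x₀ := by
      refine (hasDerivAt_const x₀ (0:ℝ)).hasDerivWithinAt.congr ?_ ?_
      · intro z hz; exact clog_eq_zero_of_ge hz
      · exact clog_eq_zero_of_ge le_rfl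
    have hU := left.union right
    rw [Set.Iic_union_Ici] at hU
    rw [(hasDerivWithinAt_univ.mp hU).deriv]
    unfold Gfun
    rw [if_pos le_rfl, gfun_x₀ hx₀]
  · have hev : clog x₀ =ᶠ[nhds y] (fun _ => (0:ℝ)) := by
      filter_upwards [Ioi_mem_nhds hgt] with z hz
      exact clog_eq_zero_of_ge hz.le
    rw [hev.deriv_eq, deriv_const]
    unfold Gfun
    rw [if_neg (not_le.mpr hgt)]

lemma deriv_G_eq {x₀ : ℝ} (hx₀ : 0 < x₀) :
    ∀ y, 0 < y → deriv (Gfun x₀) y = Hfun x₀ y := by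
  intro y hy
  rcases lt_trichotomy y x₀ with hlt | heq | hgt
  · have hev : Gfun x₀ =ᶠ[nhds y] gfun x₀ := by
      filter_upwards [Iio_mem_nhds hlt] with z hz
      unfold Gfun
      rw [if_pos hz.le]
    rw [((g_deriv hx₀ hy).congr_of_eventuallyEq hev).deriv]
    unfold Hfun
    rw [if_pos hlt.le]
  · rw [heq]
    have left : HasDerivWithinAt (Gfun x₀) 0 (Set.Iic x₀) x₀ := by
      have hg : HasDerivAt (gfun x₀) 0 x₀ := hfun_x₀ hx₀ ▸ g_deriv hx₀ hx₀
      refine (hg.hasDerivWithinAt).congr ?_ ?_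
      · intro z hz; unfold Gfun; rw [if_pos (Set.mem_Iic.mp hz)]
      · unfold Gfun; rw [if_pos le_rfl]
    have right : HasDerivWithinAt (Gfun x₀) 0 (Set.Ici x₀) x₀ := by
      refine (hasDerivAt_const x₀ (0:ℝ)).hasDerivWithinAt.congr ?_ ?_
      · intro z hz
        unfold Gfun
        rcases eq_or_lt_of_le (Set.mem_Ici.mp hz) with rfl | h
        · rw [if_pos le_rfl]; exact gfun_x₀ hx₀
        · rw [if_neg (not_le.mpr h)]
      · unfold Gfun; rw [if_pos le_rfl]; exact gfun_x₀ hx₀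
    have hU := left.union right
    rw [Set.Iic_union_Ici] at hU
    rw [(hasDerivWithinAt_univ.mp hU).deriv]
    unfold Hfun
    rw [if_pos le_rfl, hfun_x₀ hx₀]
  · have hev : Gfun x₀ =ᶠ[nhds y] (fun _ => (0:ℝ)) := by
      filter_upwards [Ioi_mem_nhds hgt] with z hz
      unfold Gfun
      rw [if_neg (not_le.mpr hz)]
    rw [hev.deriv_eq, deriv_const]
    unfold Hfun
    rw [if_neg (not_le.mpr hgt)]

/-- Key lower bound for the RHS: `-A ≤ -A * log x / x^3` for `A ≥ 0`, `x > 0`. -/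
lemma keyRHS {A x : ℝ} (hA : 0 ≤ A) (hx : 0 < x) : -A ≤ -A * Real.log x / x^3 := by
  rcases le_or_gt x 1 with hx1 | hx1
  · have hlog : Real.log x ≤ 0 := Real.log_nonpos hx.le hx1
    have h1 : 0 ≤ -A * Real.log x := by nlinarith
    have h2 : 0 ≤ -A * Real.log x / x^3 := div_nonneg h1 (by positivity)
    linarith
  · have hlog : Real.log x ≤ x^3 := by
      have h1 : Real.log x ≤ x - 1 := Real.log_le_sub_one_of_pos hx
      nlinarith [mul_nonneg (mul_nonneg hx.le (show (0:ℝ) ≤ x - 1 by linarith))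
        (show (0:ℝ) ≤ x + 1 by linarith)]
    have h2 : A * Real.log x / x^3 ≤ A := by
      rw [div_le_iff₀ (by positivity)]
      nlinarith [Real.log_nonneg hx1.le]
    have : -A * Real.log x / x^3 = -(A * Real.log x / x^3) := by ring
    linarith [this]

theorem clog_second_deriv_bound (x₀ : ℝ) (hx₀ : 0 < x₀) :
    ∃ L₁₁ : ℝ, L₁₁ < 0 ∧ ∃ L₁₂ : ℝ, 0 < L₁₂ ∧
      ∀ x : ℝ, 0 < x →
        |deriv (deriv (clog x₀)) x| ≤ L₁₁ * Real.log x / x^3 + L₁₂ := by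
  set lx := |Real.log x₀| with hlx
  have hlx0 : 0 ≤ lx := abs_nonneg _
  set A : ℝ := 5*x₀^2 + 2*x₀^2*lx + 2*x₀ + 1 with hA
  set M : ℝ := (8*x₀^2 + 4*x₀^2*lx) * Real.exp 3 with hM
  have hA0 : 0 < A := by positivity
  have hM0 : 0 ≤ M := by positivity
  refine ⟨-A, by linarith, M + A, by linarith, ?_⟩
  intro x hx
  have e1 : deriv (deriv (clog x₀)) x = deriv (Gfun x₀) x := by
    apply Filter.EventuallyEq.deriv_eq
    filter_upwards [Ioi_mem_nhds hx] with z hz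
    exact deriv_clog_eq hx₀ z hz
  rw [e1, deriv_G_eq hx₀ x hx]
  have hkey : -A ≤ -A * Real.log x / x^3 := keyRHS hA0.le hx
  by_cases hxx₀ : x ≤ x₀
  · have hN : Hfun x₀ x =
        (-(2*x₀^2) * (Real.log x - Real.log x₀) - x^2 - 2*x₀*x + 3*x₀^2) / x^3 := by
      unfold Hfun hfun
      rw [if_pos hxx₀, Real.log_div hx.ne' hx₀.ne']
      field_simp
    set N := -(2*x₀^2) * (Real.log x - Real.log x₀) - x^2 - 2*x₀*x + 3*x₀^2 with hNdef
    rw [hN, abs_div, abs_of_pos (show (0:ℝ) < x^3 by positivity)]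
    by_cases hc : x ≤ Real.exp (-1)
    · -- small x
      have ht : Real.log x ≤ -1 := by
        calc Real.log x ≤ Real.log (Real.exp (-1)) := Real.log_le_log hx hc
        _ = -1 := Real.log_exp _
      have key : |N| ≤ A * (-Real.log x) := by
        rw [abs_le]
        constructor
        · nlinarith [le_abs_self (Real.log x₀), neg_abs_le (Real.log x₀), sq_nonneg x₀,
            sq_nonneg x, mul_pos hx hx₀, mul_nonneg (mul_nonneg (sq_nonneg x₀) hlx0)
              (show (0:ℝ) ≤ -Real.log x - 1 by linarith)]
        · nlinarith [le_abs_self (Real.log x₀), neg_abs_le (Real.log x₀), sq_nonneg x₀,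
            sq_nonneg x, mul_pos hx hx₀, mul_nonneg (mul_nonneg (sq_nonneg x₀) hlx0)
              (show (0:ℝ) ≤ -Real.log x - 1 by linarith)]
      have h1 : |N| / x^3 ≤ A * (-Real.log x) / x^3 := by
        gcongr
      have h2 : A * (-Real.log x) / x^3 = -A * Real.log x / x^3 := by ring
      linarith [h1, h2 ▸ h1]
    · -- x > exp (-1)
      push_neg at hc
      have hx3 : Real.exp (-3) ≤ x^3 := by
        have h1 : Real.exp (-1)^3 ≤ x^3 := pow_le_pow_left₀ (Real.exp_pos _).le hc.le 3
        have h2 : Real.exp (-3) = Real.exp (-1)^3 := by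
          rw [← Real.exp_nat_mul]; norm_num
        linarith
      have hlb : -1 ≤ Real.log x := by
        calc (-1 : ℝ) = Real.log (Real.exp (-1)) := (Real.log_exp _).symm
        _ ≤ Real.log x := Real.log_le_log (Real.exp_pos _) hc.le
      have hub : Real.log x ≤ lx := by
        calc Real.log x ≤ Real.log x₀ := Real.log_le_log hx hxx₀
        _ ≤ lx := le_abs_self _
      have key : |N| ≤ 8*x₀^2 + 4*x₀^2*lx := by
        rw [abs_le]
        constructor
        · nlinarith [le_abs_self (Real.log x₀), neg_abs_le (Real.log x₀), sq_nonneg x₀,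
            mul_pos hx hx₀, mul_le_mul hxx₀ hxx₀ hx.le hx₀.le,
            mul_nonneg (mul_nonneg (sq_nonneg x₀) hlx0) (show (0:ℝ) ≤ lx + 1 by linarith)]
        · nlinarith [le_abs_self (Real.log x₀), neg_abs_le (Real.log x₀), sq_nonneg x₀,
            mul_pos hx hx₀, mul_le_mul hxx₀ hxx₀ hx.le hx₀.le,
            mul_nonneg (mul_nonneg (sq_nonneg x₀) hlx0) (show (0:ℝ) ≤ lx + 1 by linarith)]
      have hdiv : |N| / x^3 ≤ M := by
        rw [div_le_iff₀ (show (0:ℝ) < x^3 by positivity)]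
        have hK : (0:ℝ) ≤ 8*x₀^2 + 4*x₀^2*lx := by positivity
        have he : Real.exp 3 * Real.exp (-3) = 1 := by
          rw [← Real.exp_add]; norm_num
        calc |N| ≤ 8*x₀^2 + 4*x₀^2*lx := key
        _ = (8*x₀^2 + 4*x₀^2*lx) * (Real.exp 3 * Real.exp (-3)) := by rw [he, mul_one]
        _ ≤ (8*x₀^2 + 4*x₀^2*lx) * (Real.exp 3 * x^3) :=
            mul_le_mul_of_nonneg_left
              (mul_le_mul_of_nonneg_left hx3 (Real.exp_pos 3).le) hK
        _ = M * x^3 := by rw [hM]; ring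
      linarith
  · push_neg at hxx₀
    unfold Hfun
    rw [if_neg (not_le.mpr hxx₀), abs_zero]
    linarith
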